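/- Let u_i, u_j ∈ ℝ, let c ∈ ℝ^d, let f : ℝ → ℝ^d, and let d_{ij} > 0 be an artificial viscosity coefficient satisfying |c · (f(u_j) − f(u_i))| ≤ d_{ij} |u_j − u_i|, where · denotes the Euclidean dot product. Then the bar state ū_{ij} = (u_i + u_j)/2 − c · (f(u_j) − f(u_i)) / (2 d_{ij}) satisfies the local maximum principle min{u_i, u_j} ≤ ū_{ij} ≤ max{u_i, u_j}. In particular, the bar states of the low-order scheme with Rusanov-type artificial viscosity (which validates the hypothesis via the guaranteed maximum speed bound) stay in the interval spanned by the two nodal states. -/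

import Mathlib

/-- Local maximum principle for low-order bar states: under the Rusanov-type viscosity
bound, the bar state lies between the two nodal states. -/
theorem bar_state_local_max_principle (d : ℕ) (c : EuclideanSpace ℝ (Fin d))
    (f : ℝ → EuclideanSpace ℝ (Fin d)) (ui uj dij : ℝ) (hd : 0 < dij)
    (hbound : |(inner ℝ c (f uj - f ui) : ℝ)| ≤ dij * |uj - ui|) :
    min ui uj ≤ (ui + uj) / 2 - (inner ℝ c (f uj - f ui) : ℝ) / (2 * dij) ∧
      (ui + uj) / 2 - (inner ℝ c (f uj - f ui) : ℝ) / (2 * dij) ≤ max ui uj := by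
  set b : ℝ := (inner ℝ c (f uj - f ui) : ℝ) with hb
  obtain ⟨h1, h2⟩ := abs_le.mp hbound
  have hu : b / (2 * dij) ≤ |uj - ui| / 2 := by
    rw [div_le_div_iff₀ (by positivity) (by norm_num)]
    nlinarith
  have hl : -(|uj - ui| / 2) ≤ b / (2 * dij) := by
    rw [neg_le, ← neg_div, div_le_div_iff₀ (by positivity) (by norm_num)]
    nlinarith
  rcases le_total ui uj with h | h
  · rw [min_eq_left h, max_eq_right h, abs_of_nonneg (by linarith : (0:ℝ) ≤ uj - ui)] at *
    constructor <;> linarith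
  · rw [min_eq_right h, max_eq_left h, abs_of_nonpos (by linarith : uj - ui ≤ 0)] at *
    constructor <;> linarith
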